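/- (Second order exactness for the bivariate normal correlation.) Fix ρ₀ ∈ (−1,1) and let a, b > 0 satisfy the first order matching condition a = b (1−ρ₀)²/(1+ρ₀)². Define J(ρ₀,ρ) := a(1+ρ₀)/(1+ρ) + b(1−ρ₀)/(1−ρ), I(ρ) := (1+ρ²)/(1−ρ²)², and m₃(ρ) := ∫_{ℝ²} ( ∂³/∂ρ³ log f_ρ(x,y) ) f_ρ(x,y) dx dy. Then the second order coverage term vanishes: Δ₂ := J(ρ₀,ρ₀)^{−1} [ (1/6)(d/dρ){ I(ρ)^{−2} J(ρ₀,ρ) m₃(ρ) } − (1/2)(d²/dρ²){ J(ρ₀,ρ) I(ρ)^{−1} } ] evaluated at ρ = ρ₀ equals 0. -/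

import Mathlib

open MeasureTheory Filter Set Topology

namespace SOE16

private lemma congr_both {f g : ℝ → ℝ} {d d' x : ℝ} (h : HasDerivAt f d x)
    (hfg : ∀ t, g t = f t) (hd : d' = d) : HasDerivAt g d' x := by
  subst hd
  exact h.congr_of_eventuallyEq (Filter.Eventually.of_forall hfg)

private lemma hasDerivAt_poly5 (c0 c1 c2 c3 c4 c5 r : ℝ) :
    HasDerivAt (fun t : ℝ => c0 + c1*t + c2*t^2 + c3*t^3 + c4*t^4 + c5*t^5)
      (c1 + 2*c2*r + 3*c3*r^2 + 4*c4*r^3 + 5*c5*r^4) r := by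
  have h1 : HasDerivAt (fun t : ℝ => c1*t) c1 r := by
    simpa using (hasDerivAt_id r).const_mul c1
  have h :=
    ((((hasDerivAt_const r c0).add h1).add ((hasDerivAt_pow 2 r).const_mul c2)).add
        ((hasDerivAt_pow 3 r).const_mul c3)).add ((hasDerivAt_pow 4 r).const_mul c4)
  have h' := h.add ((hasDerivAt_pow 5 r).const_mul c5)
  exact congr_both h' (fun t => rfl) (by push_cast; ring)

noncomputable def pdf (v x : ℝ) : ℝ :=
  (Real.sqrt (2*Real.pi*v))⁻¹ * Real.exp (-(1/(2*v)) * x^2)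

lemma hβpos {v : ℝ} (hv : 0 < v) : 0 < 1/(2*v) := by positivity

lemma int_exp {v : ℝ} (hv : 0 < v) :
    Integrable (fun x : ℝ => Real.exp (-(1/(2*v)) * x^2)) :=
  integrable_exp_neg_mul_sq (hβpos hv)

lemma int_x_exp {v : ℝ} (hv : 0 < v) :
    Integrable (fun x : ℝ => x * Real.exp (-(1/(2*v)) * x^2)) :=
  integrable_mul_exp_neg_mul_sq (hβpos hv)

lemma int_x2_exp {v : ℝ} (hv : 0 < v) :
    Integrable (fun x : ℝ => x^2 * Real.exp (-(1/(2*v)) * x^2)) := by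
  have h := integrable_rpow_mul_exp_neg_mul_sq (hβpos hv)
    (show (-1:ℝ) < ((2:ℕ):ℝ) by norm_num)
  simpa [Real.rpow_natCast] using h

lemma gauss1 {β : ℝ} (hβ : 0 < β) : ∫ x : ℝ, x * Real.exp (-β*x^2) = 0 := by
  have hv : ∀ x : ℝ, HasDerivAt (fun t : ℝ => -(2*β)⁻¹ * Real.exp (-β*t^2))
      (x * Real.exp (-β*x^2)) x := by
    intro x
    have h1 : HasDerivAt (fun t : ℝ => -β*t^2) (-β*(2*x)) x := by
      simpa using (hasDerivAt_pow 2 x).const_mul (-β)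
    have := (h1.exp).const_mul (-(2*β)⁻¹)
    refine congr_both this (fun t => rfl) ?_
    field_simp
  have hu : ∀ x : ℝ, HasDerivAt (fun _ : ℝ => (1:ℝ)) ((fun _ : ℝ => (0:ℝ)) x) x :=
    fun x => hasDerivAt_const x 1
  have key := integral_mul_deriv_eq_deriv_mul_of_integrable
    (u := fun _ : ℝ => (1:ℝ)) (u' := fun _ : ℝ => (0:ℝ))
    (v := fun t : ℝ => -(2*β)⁻¹ * Real.exp (-β*t^2))
    (v' := fun x : ℝ => x * Real.exp (-β*x^2))
    (fun x _ => hu x) (fun x _ => hv x) ?_ ?_ ?_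
  · simpa using key
  · have h := integrable_mul_exp_neg_mul_sq hβ
    exact h.congr (Filter.Eventually.of_forall fun x => by simp [Pi.mul_apply])
  · have : ((fun _ : ℝ => (0:ℝ)) * fun t : ℝ => -(2*β)⁻¹ * Real.exp (-β*t^2))
        = fun _ : ℝ => (0:ℝ) := by funext t; simp
    rw [this]
    exact integrable_zero _ _ _
  · have h := (integrable_exp_neg_mul_sq hβ).const_mul (-(2*β)⁻¹)
    exact h.congr (Filter.Eventually.of_forall fun x => by simp [Pi.mul_apply])

lemma gauss2 {β : ℝ} (hβ : 0 < β) :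
    ∫ x : ℝ, x^2 * Real.exp (-β*x^2) = Real.sqrt (Real.pi/β)/(2*β) := by
  have hv : ∀ x : ℝ, HasDerivAt (fun t : ℝ => -(2*β)⁻¹ * Real.exp (-β*t^2))
      (x * Real.exp (-β*x^2)) x := by
    intro x
    have h1 : HasDerivAt (fun t : ℝ => -β*t^2) (-β*(2*x)) x := by
      simpa using (hasDerivAt_pow 2 x).const_mul (-β)
    have := (h1.exp).const_mul (-(2*β)⁻¹)
    refine congr_both this (fun t => rfl) ?_
    field_simp
  have hu : ∀ x : ℝ, HasDerivAt (fun t : ℝ => t) ((fun _ : ℝ => (1:ℝ)) x) x :=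
    fun x => hasDerivAt_id x
  have hβ2 : (0:ℝ) < 2*β := by linarith
  have key := integral_mul_deriv_eq_deriv_mul_of_integrable
    (u := fun t : ℝ => t) (u' := fun _ : ℝ => (1:ℝ))
    (v := fun t : ℝ => -(2*β)⁻¹ * Real.exp (-β*t^2))
    (v' := fun x : ℝ => x * Real.exp (-β*x^2))
    (fun x _ => hu x) (fun x _ => hv x) ?_ ?_ ?_
  · have hL : ∫ x : ℝ, x * (x * Real.exp (-β*x^2)) = ∫ x : ℝ, x^2 * Real.exp (-β*x^2) := by
      congr 1; funext x; ring
    have hR : ∫ x : ℝ, (1:ℝ) * (-(2*β)⁻¹ * Real.exp (-β*x^2))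
        = -(2*β)⁻¹ * ∫ x : ℝ, Real.exp (-β*x^2) := by
      rw [← integral_const_mul]; congr 1; funext x; ring
    rw [hL] at key
    rw [key, hR, integral_gaussian]
    field_simp
  · have h := int_x2_exp (v := 1/(2*β)) (by positivity)
    have hb : (1/(2*(1/(2*β)))) = β := by field_simp
    rw [hb] at h
    exact h.congr (Filter.Eventually.of_forall fun x => by simp [Pi.mul_apply]; ring)
  · have h := (integrable_exp_neg_mul_sq hβ).const_mul (-(2*β)⁻¹)
    exact h.congr (Filter.Eventually.of_forall fun x => by simp [Pi.mul_apply])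
  · have h := (integrable_mul_exp_neg_mul_sq hβ).const_mul (-(2*β)⁻¹)
    exact h.congr (Filter.Eventually.of_forall fun x => by simp [Pi.mul_apply]; ring)

end SOE16

namespace SOE16

lemma sqrt2piv_pos {v : ℝ} (hv : 0 < v) : 0 < Real.sqrt (2*Real.pi*v) := by
  have : (0:ℝ) < 2*Real.pi*v := by positivity
  exact Real.sqrt_pos.2 this

lemma pdf_integrable {v : ℝ} (hv : 0 < v) : Integrable (pdf v) := by
  unfold pdf
  exact (int_exp hv).const_mul _

lemma pdf_x_integrable {v : ℝ} (hv : 0 < v) : Integrable (fun x => x * pdf v x) := by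
  have h := (int_x_exp hv).const_mul ((Real.sqrt (2*Real.pi*v))⁻¹)
  exact h.congr (Filter.Eventually.of_forall fun x => by simp [pdf]; ring)

lemma pdf_x2_integrable {v : ℝ} (hv : 0 < v) : Integrable (fun x => x^2 * pdf v x) := by
  have h := (int_x2_exp hv).const_mul ((Real.sqrt (2*Real.pi*v))⁻¹)
  exact h.congr (Filter.Eventually.of_forall fun x => by simp [pdf]; ring)

lemma ipdf0 {v : ℝ} (hv : 0 < v) : ∫ x : ℝ, pdf v x = 1 := by
  unfold pdf
  rw [integral_const_mul, integral_gaussian]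
  have h1 : Real.pi/(1/(2*v)) = 2*Real.pi*v := by field_simp
  rw [h1]
  exact inv_mul_cancel₀ (ne_of_gt (sqrt2piv_pos hv))

lemma ipdf1 {v : ℝ} (hv : 0 < v) : ∫ x : ℝ, x * pdf v x = 0 := by
  have h : (fun x : ℝ => x * pdf v x)
      = fun x => (Real.sqrt (2*Real.pi*v))⁻¹ * (x * Real.exp (-(1/(2*v)) * x^2)) := by
    funext x; simp [pdf]; ring
  rw [h, integral_const_mul, gauss1 (hβpos hv), mul_zero]

lemma ipdf2 {v : ℝ} (hv : 0 < v) : ∫ x : ℝ, x^2 * pdf v x = v := by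
  have h : (fun x : ℝ => x^2 * pdf v x)
      = fun x => (Real.sqrt (2*Real.pi*v))⁻¹ * (x^2 * Real.exp (-(1/(2*v)) * x^2)) := by
    funext x; simp [pdf]; ring
  rw [h, integral_const_mul, gauss2 (hβpos hv)]
  have h1 : Real.pi/(1/(2*v)) = 2*Real.pi*v := by field_simp
  rw [h1]
  rw [div_eq_mul_inv, ← mul_assoc]
  rw [inv_mul_cancel₀ (ne_of_gt (sqrt2piv_pos hv))]
  field_simp

def shearHomeo (ρ : ℝ) : (ℝ × ℝ) ≃ₜ (ℝ × ℝ) where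
  toFun := fun p => (p.1, p.2 + ρ*p.1)
  invFun := fun p => (p.1, p.2 - ρ*p.1)
  left_inv := fun p => by simp
  right_inv := fun p => by simp
  continuous_toFun := by fun_prop
  continuous_invFun := by fun_prop

lemma shear_measurePreserving (ρ : ℝ) :
    MeasurePreserving (fun p : ℝ × ℝ => (p.1, p.2 + ρ*p.1))
      ((volume : Measure ℝ).prod volume) ((volume : Measure ℝ).prod volume) := by
  have h := MeasurePreserving.skew_product (g := fun (a c : ℝ) => c + ρ*a)
    (μc := (volume : Measure ℝ)) (μd := (volume : Measure ℝ))
    (MeasurePreserving.id (volume : Measure ℝ)) ?_ ?_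
  · exact h
  · exact measurable_snd.add (measurable_const.mul measurable_fst)
  · exact Filter.Eventually.of_forall fun a => map_add_right_eq_self volume (ρ*a)

lemma shear_integral (ρ : ℝ) (F : ℝ × ℝ → ℝ) :
    ∫ p : ℝ × ℝ, F p = ∫ p : ℝ × ℝ, F (p.1, p.2 + ρ*p.1) := by
  rw [Measure.volume_eq_prod ℝ ℝ]
  exact ((shear_measurePreserving ρ).integral_comp
    (shearHomeo ρ).measurableEmbedding F).symm

end SOE16

namespace SOE16

noncomputable def l0 (x y r : ℝ) : ℝ :=
  -Real.log (2*Real.pi) - Real.log (1-r^2)/2 - (x^2-2*r*x*y+y^2)/(2*(1-r^2))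

noncomputable def l1 (x y r : ℝ) : ℝ :=
  (x*y + (1-x^2-y^2)*r + x*y*r^2 - r^3)/(1-r^2)^2

noncomputable def l2 (x y r : ℝ) : ℝ :=
  (1-x^2-y^2 + 6*x*y*r - 3*(x^2+y^2)*r^2 + 2*x*y*r^3 - r^4)/(1-r^2)^3

noncomputable def l3 (x y r : ℝ) : ℝ :=
  (6*x*y + (6-12*(x^2+y^2))*r + 36*x*y*r^2 - (4+12*(x^2+y^2))*r^3 + 6*x*y*r^4
    - 2*r^5)/(1-r^2)^4

lemma hasDerivAt_sq (r : ℝ) : HasDerivAt (fun t : ℝ => 1 - t^2) (-(2*r)) r := by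
  simpa using (hasDerivAt_pow 2 r).const_sub 1

lemma hd1 (x y r : ℝ) (hs : 1 - r^2 ≠ 0) : HasDerivAt (l0 x y) (l1 x y r) r := by
  have hsq := hasDerivAt_sq r
  have hlog := hsq.log hs
  have hQ : HasDerivAt (fun t : ℝ => x^2-2*t*x*y+y^2) (-(2*x*y)) r := by
    have h1 : HasDerivAt (fun t : ℝ => 2*t*x*y) (2*x*y) r := by
      simpa using (((hasDerivAt_id r).const_mul 2).mul_const x).mul_const y
    simpa using ((hasDerivAt_const r (x^2)).sub h1).add_const (y^2)
  have hden : HasDerivAt (fun t : ℝ => 2*(1-t^2)) (2*(-(2*r))) r := hsq.const_mul 2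
  have h2s : 2*(1-r^2) ≠ 0 := by simpa using hs
  have hdiv := hQ.div hden h2s
  have h := ((hasDerivAt_const r (-Real.log (2*Real.pi))).sub (hlog.div_const 2)).sub hdiv
  refine congr_both h (fun t => by simp only [l0]; rfl) ?_
  simp only [l1]
  field_simp
  ring

lemma hd2 (x y r : ℝ) (hs : 1 - r^2 ≠ 0) : HasDerivAt (l1 x y) (l2 x y r) r := by
  have hnum : HasDerivAt (fun t : ℝ => x*y + (1-x^2-y^2)*t + x*y*t^2 - t^3)
      ((1-x^2-y^2) + 2*(x*y)*r - 3*r^2) r := by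
    refine congr_both (hasDerivAt_poly5 (x*y) (1-x^2-y^2) (x*y) (-1) 0 0 r)
      (fun t => by ring) (by ring)
  have hden : HasDerivAt (fun t : ℝ => (1-t^2)^2) (↑(2:ℕ)*(1-r^2)^(2-1)*(-(2*r))) r :=
    (hasDerivAt_sq r).pow 2
  have h := hnum.div hden (pow_ne_zero 2 hs)
  refine congr_both h (fun t => by simp only [l1]; rfl) ?_
  simp only [l2]
  field_simp
  ring

lemma hd3 (x y r : ℝ) (hs : 1 - r^2 ≠ 0) : HasDerivAt (l2 x y) (l3 x y r) r := by
  have hnum : HasDerivAt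
      (fun t : ℝ => 1-x^2-y^2 + 6*x*y*t - 3*(x^2+y^2)*t^2 + 2*x*y*t^3 - t^4)
      (6*x*y + 2*(-(3*(x^2+y^2)))*r + 3*(2*x*y)*r^2 + 4*(-1)*r^3) r := by
    refine congr_both (hasDerivAt_poly5 (1-x^2-y^2) (6*x*y) (-(3*(x^2+y^2))) (2*x*y) (-1) 0 r)
      (fun t => by ring) (by ring)
  have hden : HasDerivAt (fun t : ℝ => (1-t^2)^3) (↑(3:ℕ)*(1-r^2)^(3-1)*(-(2*r))) r :=
    (hasDerivAt_sq r).pow 3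
  have h := hnum.div hden (pow_ne_zero 3 hs)
  refine congr_both h (fun t => by simp only [l2]; rfl) ?_
  simp only [l3]
  field_simp
  ring

lemma iter3 (f : ℝ → ℝ × ℝ → ℝ)
    (hf : ∀ (r : ℝ) (p : ℝ × ℝ),
      f r p = (2 * Real.pi * Real.sqrt (1 - r ^ 2))⁻¹ *
        Real.exp (-(p.1 ^ 2 - 2 * r * p.1 * p.2 + p.2 ^ 2) / (2 * (1 - r ^ 2))))
    (p : ℝ × ℝ) (ρ : ℝ) (hρ : ρ ∈ Set.Ioo (-1:ℝ) 1) :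
    iteratedDeriv 3 (fun r => Real.log (f r p)) ρ = l3 p.1 p.2 ρ := by
  have hmem : Set.Ioo (-1:ℝ) 1 ∈ 𝓝 ρ := Ioo_mem_nhds hρ.1 hρ.2
  have hspos : ∀ r ∈ Set.Ioo (-1:ℝ) 1, 0 < 1 - r^2 := by
    intro r hr
    nlinarith [hr.1, hr.2]
  have h0 : (fun r => Real.log (f r p)) =ᶠ[𝓝 ρ] l0 p.1 p.2 := by
    refine eventually_of_mem hmem fun r hr => ?_
    have hs := hspos r hr
    have hsqrt : Real.sqrt (1 - r^2) ≠ 0 := ne_of_gt (Real.sqrt_pos.2 hs)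
    have h2pi : (2*Real.pi : ℝ) ≠ 0 := by positivity
    show Real.log (f r p) = l0 p.1 p.2 r
    rw [hf r p, Real.log_mul (inv_ne_zero (by positivity)) (Real.exp_ne_zero _),
      Real.log_exp, Real.log_inv, Real.log_mul h2pi hsqrt, Real.log_sqrt hs.le]
    simp only [l0]
    ring
  have e1 : deriv (fun r => Real.log (f r p)) =ᶠ[𝓝 ρ] l1 p.1 p.2 :=
    (h0.deriv).trans (eventually_of_mem hmem fun r hr =>
      (hd1 p.1 p.2 r (ne_of_gt (hspos r hr))).deriv)
  have e2 : deriv (deriv (fun r => Real.log (f r p))) =ᶠ[𝓝 ρ] l2 p.1 p.2 :=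
    (e1.deriv).trans (eventually_of_mem hmem fun r hr =>
      (hd2 p.1 p.2 r (ne_of_gt (hspos r hr))).deriv)
  have h3 : deriv (deriv (deriv (fun r => Real.log (f r p)))) ρ = l3 p.1 p.2 ρ := by
    rw [e2.deriv_eq]
    exact (hd3 p.1 p.2 ρ (ne_of_gt (hspos ρ hρ))).deriv
  rw [show (3:ℕ) = 2+1 from rfl, iteratedDeriv_succ,
    show (2:ℕ) = 1+1 from rfl, iteratedDeriv_succ, iteratedDeriv_one]
  exact h3

end SOE16

namespace SOE16

noncomputable def A3 (r : ℝ) : ℝ := (6*r - 4*r^3 - 2*r^5)/(1-r^2)^4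
noncomputable def B3 (r : ℝ) : ℝ := (6 + 36*r^2 + 6*r^4)/(1-r^2)^4
noncomputable def C3 (r : ℝ) : ℝ := -(12*r + 12*r^3)/(1-r^2)^4
noncomputable def m3c (r : ℝ) : ℝ := (-12*r + 8*r^3 + 4*r^5)/(1-r^2)^4

lemma l3_decomp (x y r : ℝ) (hs : 1 - r^2 ≠ 0) :
    l3 x y r = A3 r + B3 r * (x*y) + C3 r * (x^2+y^2) := by
  simp only [l3, A3, B3, C3]
  field_simp
  ring

lemma f_decomp (f : ℝ → ℝ × ℝ → ℝ)
    (hf : ∀ (r : ℝ) (p : ℝ × ℝ),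
      f r p = (2 * Real.pi * Real.sqrt (1 - r ^ 2))⁻¹ *
        Real.exp (-(p.1 ^ 2 - 2 * r * p.1 * p.2 + p.2 ^ 2) / (2 * (1 - r ^ 2))))
    (ρ x u : ℝ) (hs : 0 < 1 - ρ^2) :
    f ρ (x, u + ρ*x) = pdf 1 x * pdf (1-ρ^2) u := by
  rw [hf]
  simp only [pdf]
  rw [mul_mul_mul_comm, ← Real.exp_add, ← mul_inv, ← Real.sqrt_mul (by positivity)]
  have harg : (2*Real.pi*1) * (2*Real.pi*(1-ρ^2)) = (2*Real.pi)^2 * (1-ρ^2) := by ring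
  rw [harg, Real.sqrt_mul (by positivity), Real.sqrt_sq (by positivity)]
  congr 1
  have hsne : (1:ℝ) - ρ^2 ≠ 0 := ne_of_gt hs
  field_simp
  ring

lemma integrand_eq (f : ℝ → ℝ × ℝ → ℝ)
    (hf : ∀ (r : ℝ) (p : ℝ × ℝ),
      f r p = (2 * Real.pi * Real.sqrt (1 - r ^ 2))⁻¹ *
        Real.exp (-(p.1 ^ 2 - 2 * r * p.1 * p.2 + p.2 ^ 2) / (2 * (1 - r ^ 2))))
    (ρ x u : ℝ) (hs : 0 < 1 - ρ^2) :
    l3 x (u + ρ*x) ρ * f ρ (x, u + ρ*x)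
      = A3 ρ * (pdf 1 x * pdf (1-ρ^2) u)
        + (B3 ρ + 2*ρ*C3 ρ) * ((x * pdf 1 x) * (u * pdf (1-ρ^2) u))
        + (B3 ρ * ρ + C3 ρ * (1+ρ^2)) * ((x^2 * pdf 1 x) * pdf (1-ρ^2) u)
        + C3 ρ * (pdf 1 x * (u^2 * pdf (1-ρ^2) u)) := by
  rw [f_decomp f hf ρ x u hs, l3_decomp x (u+ρ*x) ρ (ne_of_gt hs)]
  ring

lemma m3_eq (f : ℝ → ℝ × ℝ → ℝ)
    (hf : ∀ (r : ℝ) (p : ℝ × ℝ),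
      f r p = (2 * Real.pi * Real.sqrt (1 - r ^ 2))⁻¹ *
        Real.exp (-(p.1 ^ 2 - 2 * r * p.1 * p.2 + p.2 ^ 2) / (2 * (1 - r ^ 2))))
    (ρ : ℝ) (hρ : ρ ∈ Set.Ioo (-1:ℝ) 1) :
    (∫ p : ℝ × ℝ, iteratedDeriv 3 (fun r => Real.log (f r p)) ρ * f ρ p) = m3c ρ := by
  have hs : 0 < 1 - ρ^2 := by nlinarith [hρ.1, hρ.2]
  have hpt : ∀ p : ℝ × ℝ,
      iteratedDeriv 3 (fun r => Real.log (f r p)) ρ * f ρ p = l3 p.1 p.2 ρ * f ρ p :=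
    fun p => by rw [iter3 f hf p ρ hρ]
  simp only [hpt]
  rw [shear_integral ρ (fun p => l3 p.1 p.2 ρ * f ρ p)]
  simp only []
  have hint : ∀ p : ℝ × ℝ, l3 p.1 (p.2 + ρ*p.1) ρ * f ρ (p.1, p.2 + ρ*p.1)
      = A3 ρ * (pdf 1 p.1 * pdf (1-ρ^2) p.2)
        + (B3 ρ + 2*ρ*C3 ρ) * ((p.1 * pdf 1 p.1) * (p.2 * pdf (1-ρ^2) p.2))
        + (B3 ρ * ρ + C3 ρ * (1+ρ^2)) * ((p.1^2 * pdf 1 p.1) * pdf (1-ρ^2) p.2)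
        + C3 ρ * (pdf 1 p.1 * (p.2^2 * pdf (1-ρ^2) p.2)) :=
    fun p => integrand_eq f hf ρ p.1 p.2 hs
  simp only [hint]
  rw [Measure.volume_eq_prod ℝ ℝ]
  have h1 : (0:ℝ) < 1 := one_pos
  set μ2 := ((volume : Measure ℝ).prod (volume : Measure ℝ)) with hμ2
  have i1 : Integrable (fun p : ℝ × ℝ =>
      A3 ρ * (pdf 1 p.1 * pdf (1-ρ^2) p.2)) μ2 :=
    ((pdf_integrable h1).mul_prod (pdf_integrable hs)).const_mul (A3 ρ)
  have i2 : Integrable (fun p : ℝ × ℝ =>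
      (B3 ρ + 2*ρ*C3 ρ) * (p.1 * pdf 1 p.1 * (p.2 * pdf (1-ρ^2) p.2))) μ2 :=
    ((pdf_x_integrable h1).mul_prod (pdf_x_integrable hs)).const_mul _
  have i3 : Integrable (fun p : ℝ × ℝ =>
      (B3 ρ * ρ + C3 ρ * (1+ρ^2)) * (p.1^2 * pdf 1 p.1 * pdf (1-ρ^2) p.2)) μ2 :=
    ((pdf_x2_integrable h1).mul_prod (pdf_integrable hs)).const_mul _
  have i4 : Integrable (fun p : ℝ × ℝ =>
      C3 ρ * (pdf 1 p.1 * (p.2^2 * pdf (1-ρ^2) p.2))) μ2 :=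
    ((pdf_integrable h1).mul_prod (pdf_x2_integrable hs)).const_mul _
  have i12 : Integrable (fun p : ℝ × ℝ =>
      A3 ρ * (pdf 1 p.1 * pdf (1-ρ^2) p.2)
      + (B3 ρ + 2*ρ*C3 ρ) * (p.1 * pdf 1 p.1 * (p.2 * pdf (1-ρ^2) p.2))) μ2 := i1.add i2
  have i123 : Integrable (fun p : ℝ × ℝ =>
      A3 ρ * (pdf 1 p.1 * pdf (1-ρ^2) p.2)
      + (B3 ρ + 2*ρ*C3 ρ) * (p.1 * pdf 1 p.1 * (p.2 * pdf (1-ρ^2) p.2))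
      + (B3 ρ * ρ + C3 ρ * (1+ρ^2)) * (p.1^2 * pdf 1 p.1 * pdf (1-ρ^2) p.2)) μ2 :=
    i12.add i3
  rw [integral_add i123 i4, integral_add i12 i3, integral_add i1 i2]
  simp only [integral_const_mul]
  have p1 : (∫ p : ℝ × ℝ, pdf 1 p.1 * pdf (1-ρ^2) p.2 ∂μ2)
      = (∫ x : ℝ, pdf 1 x) * (∫ x : ℝ, pdf (1-ρ^2) x) := integral_prod_mul _ _
  have p2 : (∫ p : ℝ × ℝ, p.1 * pdf 1 p.1 * (p.2 * pdf (1-ρ^2) p.2) ∂μ2)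
      = (∫ x : ℝ, x * pdf 1 x) * (∫ x : ℝ, x * pdf (1-ρ^2) x) :=
      integral_prod_mul (fun x => x * pdf 1 x) (fun x => x * pdf (1-ρ^2) x)
  have p3 : (∫ p : ℝ × ℝ, p.1^2 * pdf 1 p.1 * pdf (1-ρ^2) p.2 ∂μ2)
      = (∫ x : ℝ, x^2 * pdf 1 x) * (∫ x : ℝ, pdf (1-ρ^2) x) :=
      integral_prod_mul (fun x => x^2 * pdf 1 x) (pdf (1-ρ^2))
  have p4 : (∫ p : ℝ × ℝ, pdf 1 p.1 * (p.2^2 * pdf (1-ρ^2) p.2) ∂μ2)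
      = (∫ x : ℝ, pdf 1 x) * (∫ x : ℝ, x^2 * pdf (1-ρ^2) x) :=
      integral_prod_mul (pdf 1) (fun x => x^2 * pdf (1-ρ^2) x)
  rw [p1, p2, p3, p4, ipdf0 h1, ipdf0 hs, ipdf1 h1, ipdf1 hs, ipdf2 h1, ipdf2 hs]
  simp only [m3c]
  have hsne : (1:ℝ) - ρ^2 ≠ 0 := ne_of_gt hs
  simp only [A3, B3, C3]
  field_simp
  ring

end SOE16

namespace SOE16

noncomputable def Fc (E K : ℝ) : ℝ → ℝ := fun r =>
  (-(12*E)*r - 12*K*r^2 - 4*E*r^3 - 4*K*r^4)/(1+r^2)^2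

noncomputable def Gc (E K : ℝ) : ℝ → ℝ := fun r =>
  (E + K*r - E*r^2 - K*r^3)/(1+r^2)

noncomputable def Gc1 (E K : ℝ) : ℝ → ℝ := fun r =>
  (K - 4*E*r - 4*K*r^2 - K*r^4)/(1+r^2)^2

lemma one_add_sq_ne (r : ℝ) : (1:ℝ) + r^2 ≠ 0 := by positivity

lemma hasDerivAt_base (r : ℝ) : HasDerivAt (fun t : ℝ => 1 + t^2) (2*r) r := by
  simpa using (hasDerivAt_pow 2 r).const_add 1

lemma hasDerivAt_Fc (E K r : ℝ) : HasDerivAt (Fc E K)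
    (((-(12*E) - 24*K*r - 12*E*r^2 - 16*K*r^3) * (1+r^2)^2
      - (-(12*E)*r - 12*K*r^2 - 4*E*r^3 - 4*K*r^4) * (4*r*(1+r^2))) / (1+r^2)^4) r := by
  have hnum : HasDerivAt (fun t : ℝ => -(12*E)*t - 12*K*t^2 - 4*E*t^3 - 4*K*t^4)
      (-(12*E) - 24*K*r - 12*E*r^2 - 16*K*r^3) r :=
    congr_both (hasDerivAt_poly5 0 (-(12*E)) (-(12*K)) (-(4*E)) (-(4*K)) 0 r)
      (fun t => by ring) (by ring)
  have hden : HasDerivAt (fun t : ℝ => (1+t^2)^2) (↑(2:ℕ)*(1+r^2)^(2-1)*(2*r)) r :=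
    (hasDerivAt_base r).pow 2
  have h := hnum.div hden (pow_ne_zero 2 (one_add_sq_ne r))
  refine congr_both h (fun t => by simp only [Fc]; rfl) ?_
  have hq := one_add_sq_ne r
  field_simp
  ring

lemma hasDerivAt_Gc (E K r : ℝ) : HasDerivAt (Gc E K) (Gc1 E K r) r := by
  have hnum : HasDerivAt (fun t : ℝ => E + K*t - E*t^2 - K*t^3)
      (K - 2*E*r - 3*K*r^2) r :=
    congr_both (hasDerivAt_poly5 E K (-E) (-K) 0 0 r) (fun t => by ring) (by ring)
  have h := hnum.div (hasDerivAt_base r) (one_add_sq_ne r)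
  refine congr_both h (fun t => by simp only [Gc]; rfl) ?_
  simp only [Gc1]
  have hq := one_add_sq_ne r
  field_simp
  ring

lemma hasDerivAt_Gc1 (E K r : ℝ) : HasDerivAt (Gc1 E K)
    (((-(4*E) - 8*K*r - 4*K*r^3) * (1+r^2)^2
      - (K - 4*E*r - 4*K*r^2 - K*r^4) * (4*r*(1+r^2))) / (1+r^2)^4) r := by
  have hnum : HasDerivAt (fun t : ℝ => K - 4*E*t - 4*K*t^2 - K*t^4)
      (-(4*E) - 8*K*r - 4*K*r^3) r :=
    congr_both (hasDerivAt_poly5 K (-(4*E)) (-(4*K)) 0 (-K) 0 r)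
      (fun t => by ring) (by ring)
  have hden : HasDerivAt (fun t : ℝ => (1+t^2)^2) (↑(2:ℕ)*(1+r^2)^(2-1)*(2*r)) r :=
    (hasDerivAt_base r).pow 2
  have h := hnum.div hden (pow_ne_zero 2 (one_add_sq_ne r))
  refine congr_both h (fun t => by simp only [Gc1]; rfl) ?_
  have hq := one_add_sq_ne r
  field_simp
  ring

end SOE16

/-- Second order exactness for the bivariate normal correlation.
If the first order matching condition `a = b(1−ρ₀)²/(1+ρ₀)²` holds, then the second order
coverage term
`Δ₂ = J(ρ₀,ρ₀)⁻¹[(1/6)(d/dρ){I(ρ)⁻²J(ρ₀,ρ)m₃(ρ)} − (1/2)(d²/dρ²){J(ρ₀,ρ)I(ρ)⁻¹}]|_{ρ=ρ₀}`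
vanishes. -/
theorem second_order_exactness_bivariate_normal
    (ρ₀ : ℝ) (hρ₀ : ρ₀ ∈ Set.Ioo (-1 : ℝ) 1)
    (a b : ℝ) (ha : 0 < a) (hb : 0 < b)
    (hab : a = b * (1 - ρ₀) ^ 2 / (1 + ρ₀) ^ 2)
    (f : ℝ → ℝ × ℝ → ℝ)
    (hf : ∀ (r : ℝ) (p : ℝ × ℝ),
      f r p = (2 * Real.pi * Real.sqrt (1 - r ^ 2))⁻¹ *
        Real.exp (-(p.1 ^ 2 - 2 * r * p.1 * p.2 + p.2 ^ 2) / (2 * (1 - r ^ 2))))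
    (J : ℝ → ℝ) (hJ : ∀ ρ : ℝ, J ρ = a * (1 + ρ₀) / (1 + ρ) + b * (1 - ρ₀) / (1 - ρ))
    (I : ℝ → ℝ) (hI : ∀ ρ : ℝ, I ρ = (1 + ρ ^ 2) / (1 - ρ ^ 2) ^ 2)
    (m₃ : ℝ → ℝ)
    (hm₃ : ∀ ρ : ℝ,
      m₃ ρ = ∫ p : ℝ × ℝ, iteratedDeriv 3 (fun r => Real.log (f r p)) ρ * f ρ p) :
    (J ρ₀)⁻¹ *
        ((1 / 6) * deriv (fun ρ => (I ρ ^ 2)⁻¹ * J ρ * m₃ ρ) ρ₀ -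
          (1 / 2) * iteratedDeriv 2 (fun ρ => J ρ * (I ρ)⁻¹) ρ₀) = 0 := by
  obtain ⟨hl, hr⟩ := hρ₀
  have hmem : Set.Ioo (-1:ℝ) 1 ∈ 𝓝 ρ₀ := Ioo_mem_nhds hl hr
  have h1ρ₀ : (0:ℝ) < 1 + ρ₀ := by linarith
  have hEKrel : b*(1-ρ₀) - a*(1+ρ₀) = (a*(1+ρ₀) + b*(1-ρ₀)) * ρ₀ := by
    rw [hab]; field_simp; ring
  set E := a*(1+ρ₀) + b*(1-ρ₀) with hE
  set K := b*(1-ρ₀) - a*(1+ρ₀) with hK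
  have hFcEq : ∀ ρ ∈ Set.Ioo (-1:ℝ) 1, (I ρ ^ 2)⁻¹ * J ρ * m₃ ρ = SOE16.Fc E K ρ := by
    intro ρ hρ
    have hs : 0 < 1 - ρ^2 := by nlinarith [hρ.1, hρ.2]
    have h1 : (1:ℝ) + ρ ≠ 0 := by nlinarith [hρ.1]
    have h2 : (1:ℝ) - ρ ≠ 0 := by nlinarith [hρ.2]
    have hq := SOE16.one_add_sq_ne ρ
    have hsne : (1:ℝ) - ρ^2 ≠ 0 := ne_of_gt hs
    rw [hm₃ ρ, SOE16.m3_eq f hf ρ hρ, hI, hJ]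
    simp only [SOE16.Fc, SOE16.m3c, hE, hK]
    field_simp
    ring
  have hGcEq : ∀ ρ ∈ Set.Ioo (-1:ℝ) 1, J ρ * (I ρ)⁻¹ = SOE16.Gc E K ρ := by
    intro ρ hρ
    have hs : 0 < 1 - ρ^2 := by nlinarith [hρ.1, hρ.2]
    have h1 : (1:ℝ) + ρ ≠ 0 := by nlinarith [hρ.1]
    have h2 : (1:ℝ) - ρ ≠ 0 := by nlinarith [hρ.2]
    have hq := SOE16.one_add_sq_ne ρ
    have hsne : (1:ℝ) - ρ^2 ≠ 0 := ne_of_gt hs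
    rw [hI, hJ]
    simp only [SOE16.Gc, hE, hK]
    field_simp
    ring
  have hFev : (fun ρ => (I ρ ^ 2)⁻¹ * J ρ * m₃ ρ) =ᶠ[𝓝 ρ₀] SOE16.Fc E K :=
    eventually_of_mem hmem hFcEq
  have hGev : (fun ρ => J ρ * (I ρ)⁻¹) =ᶠ[𝓝 ρ₀] SOE16.Gc E K :=
    eventually_of_mem hmem hGcEq
  rw [hFev.deriv_eq, (SOE16.hasDerivAt_Fc E K ρ₀).deriv]
  have h21 : iteratedDeriv 2 (fun ρ => J ρ * (I ρ)⁻¹) ρ₀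
      = deriv (deriv (fun ρ => J ρ * (I ρ)⁻¹)) ρ₀ := by
    rw [show (2:ℕ) = 1+1 from rfl, iteratedDeriv_succ, iteratedDeriv_one]
  rw [h21, hGev.deriv.deriv_eq]
  have hdG : deriv (SOE16.Gc E K) = SOE16.Gc1 E K :=
    funext fun r => (SOE16.hasDerivAt_Gc E K r).deriv
  rw [hdG, (SOE16.hasDerivAt_Gc1 E K ρ₀).deriv]
  have hbr : (1 / 6 : ℝ) *
        (((-(12*E) - 24*K*ρ₀ - 12*E*ρ₀^2 - 16*K*ρ₀^3) * (1+ρ₀^2)^2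
          - (-(12*E)*ρ₀ - 12*K*ρ₀^2 - 4*E*ρ₀^3 - 4*K*ρ₀^4) * (4*ρ₀*(1+ρ₀^2))) / (1+ρ₀^2)^4)
      - (1 / 2 : ℝ) *
        (((-(4*E) - 8*K*ρ₀ - 4*K*ρ₀^3) * (1+ρ₀^2)^2
          - (K - 4*E*ρ₀ - 4*K*ρ₀^2 - K*ρ₀^4) * (4*ρ₀*(1+ρ₀^2))) / (1+ρ₀^2)^4) = 0 := by
    rw [hEKrel]
    have hq := SOE16.one_add_sq_ne ρ₀
    field_simp
    ring
  rw [hbr, mul_zero]
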